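/- Let (k,m) ∈ ℕ × ℕ*, let z ∈ ℳ_{k,m} be a fixed point of F_{k,m}, let L : ℳ_{k,m} → ℳ_{k,m} be the derivative D_z F_{k,m}, let L^* : ℳ_{k,m}^* → ℳ_{k,m}^* be its transpose (L^*ω = ω ∘ L), and set δ_i = d·z_i^{d−1} for i ≥ 1. Then L^*ω_1 = −δ_{m−1}·ω_{m−1} if k = 0, and L^*ω_1 = −(β·δ_{k+m−1}·ω_{k+m−1} − δ_{k−1}·ω_{k−1})/(β − 1) if k ≥ 1; and L^*ω_i = δ_{i−1}·ω_{i−1} + L^*ω_1 for all i ≥ 2. -/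

import Mathlib

noncomputable section

/-- Model of the space `𝓔 = ℂ^{ℕ*}` of complex sequences `(x_i)_{i ≥ 1}`:
functions `ℕ → ℂ` with a dummy coordinate `x 0` which encodes the convention `x₀ := 0`. -/
abbrev Eseq : Type := ℕ → ℂ

/-- The submodule of `ℕ → ℂ` corresponding to `𝓔` (dummy coordinate `0` vanishes). -/
def E0 : Submodule ℂ Eseq where
  carrier := {x | x 0 = 0}
  add_mem' := by
    rintro a b ha hb
    simp only [Set.mem_setOf_eq, Pi.add_apply] at *
    rw [ha, hb]; ring
  zero_mem' := rfl
  smul_mem' := by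
    rintro c a ha
    simp only [Set.mem_setOf_eq, Pi.smul_apply] at *
    rw [ha, smul_zero]

/-- `𝓛`: the subspace of constant sequences. -/
def Lconst : Submodule ℂ Eseq where
  carrier := {x | x 0 = 0 ∧ ∀ i, 1 ≤ i → x i = x 1}
  add_mem' := by
    rintro a b ⟨ha0, ha⟩ ⟨hb0, hb⟩
    exact ⟨by simp [ha0, hb0], fun i hi => by simp only [Pi.add_apply, ha i hi, hb i hi]⟩
  zero_mem' := ⟨rfl, fun i _ => rfl⟩
  smul_mem' := by
    rintro c a ⟨ha0, ha⟩
    exact ⟨by simp [ha0], fun i hi => by simp only [Pi.smul_apply, ha i hi]⟩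

/-- `ℋ_{k,m} = {x ∈ 𝓔 : β x_{k+m} − x_k = 0}` (convention `x₀ := 0`). -/
def Hspace (β : ℂ) (k m : ℕ) : Submodule ℂ Eseq where
  carrier := {x | x 0 = 0 ∧ β * x (k + m) - x k = 0}
  add_mem' := by
    rintro a b ⟨ha0, ha⟩ ⟨hb0, hb⟩
    refine ⟨by simp [ha0, hb0], ?_⟩
    simp only [Pi.add_apply]
    linear_combination ha + hb
  zero_mem' := ⟨rfl, by simp⟩
  smul_mem' := by
    rintro c a ⟨ha0, ha⟩
    refine ⟨by simp [ha0], ?_⟩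
    simp only [Pi.smul_apply, smul_eq_mul]
    linear_combination c * ha

/-- `𝓟_{k,m} = {x ∈ 𝓔 : x_{i+m} = x_i for all i ≥ k+1}`. -/
def Pspace (k m : ℕ) : Submodule ℂ Eseq where
  carrier := {x | x 0 = 0 ∧ ∀ i, k + 1 ≤ i → x (i + m) = x i}
  add_mem' := by
    rintro a b ⟨ha0, ha⟩ ⟨hb0, hb⟩
    exact ⟨by simp [ha0, hb0], fun i hi => by simp only [Pi.add_apply, ha i hi, hb i hi]⟩
  zero_mem' := ⟨rfl, fun i _ => rfl⟩
  smul_mem' := by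
    rintro c a ⟨ha0, ha⟩
    exact ⟨by simp [ha0], fun i hi => by simp only [Pi.smul_apply, ha i hi]⟩

/-- `ℳ_{k,m} = 𝓟_{k,m} ∩ ℋ_{k,m}`. -/
def Mspace (β : ℂ) (k m : ℕ) : Submodule ℂ Eseq := Pspace k m ⊓ Hspace β k m

/-- `Q : 𝓔 → 𝓔`, `Q(x)_1 = 0`, `Q(x)_i = x_{i-1}^d` for `i ≥ 2`. -/
def Qmap (d : ℕ) (x : Eseq) : Eseq := fun i => if 2 ≤ i then (x (i - 1)) ^ d else 0

/-- The constant subtracted by the projection `π_{k,m}` onto `ℋ_{k,m}` parallel to `𝓛`. -/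
def kappa (β : ℂ) (k m : ℕ) (x : Eseq) : ℂ :=
  if k = 0 then x m else (β * x (k + m) - x k) / (β - 1)

/-- `π_{k,m} : 𝓔 → 𝓔`, the projection onto `ℋ_{k,m}` parallel to `𝓛`. -/
def projH (β : ℂ) (k m : ℕ) (x : Eseq) : Eseq :=
  fun i => if i = 0 then 0 else x i - kappa β k m x

/-- `F_{k,m} = π_{k,m} ∘ Q`. -/
def Fmap (β : ℂ) (d k m : ℕ) (x : Eseq) : Eseq := projH β k m (Qmap d x)

/-- The coordinate linear form `ω_i` on `ℳ_{k,m}`. -/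
def omegaForm (β : ℂ) (k m : ℕ) (i : ℕ) : Module.Dual ℂ (Mspace β k m) where
  toFun v := (v : Eseq) i
  map_add' a b := rfl
  map_smul' c a := rfl

/-- `L` is the derivative `D_x F_{k,m} : ℳ_{k,m} → ℳ_{k,m}` of `F_{k,m}` at `x`:
in every direction `v ∈ ℳ_{k,m}` and coordinate `i`, `L v` is the derivative at `t = 0`
of `t ↦ F_{k,m}(x + t v)_i`. -/
def IsDerivAt (β : ℂ) (d k m : ℕ) (x : Eseq)
    (L : Mspace β k m →ₗ[ℂ] Mspace β k m) : Prop :=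
  ∀ v : Mspace β k m, ∀ i : ℕ,
    ((L v : Eseq) i) = deriv (fun t : ℂ => Fmap β d k m (x + t • (v : Eseq)) i) 0

/-- The critical set `C(F_{k,m})`: points of `ℳ_{k,m}` where the derivative is not invertible. -/
def CsetD (β : ℂ) (d k m : ℕ) : Set Eseq :=
  {x | x ∈ Mspace β k m ∧
    ∀ L : Mspace β k m →ₗ[ℂ] Mspace β k m, IsDerivAt β d k m x L → ¬ Function.Bijective L}

/-- The post-critical set `PC(F_{k,m}) = ⋃_{j ≥ 1} F_{k,m}^{∘j}(C(F_{k,m}))`. -/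
def PCsetD (β : ℂ) (d k m : ℕ) : Set Eseq :=
  ⋃ j : ℕ, ⋃ _ : 1 ≤ j, (Fmap β d k m)^[j] '' CsetD β d k m

/-- `Δ_{k,m} = {x ∈ ℳ_{k,m} : x_i = x_j for some 1 ≤ i < j ≤ k+m}`. -/
def Delta (β : ℂ) (k m : ℕ) : Set Eseq :=
  {x | x ∈ Mspace β k m ∧ ∃ i j : ℕ, 1 ≤ i ∧ i < j ∧ j ≤ k + m ∧ x i = x j}

/-- Coordinates of a point of `ℂ^n`, indexed from `1` to `n`, with the convention `x₀ := 0`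
(and value `0` out of range). -/
def coordFin {n : ℕ} (x : Fin n → ℂ) (i : ℕ) : ℂ :=
  if h : 1 ≤ i ∧ i ≤ n then x ⟨i - 1, by omega⟩ else 0

/-- The Koch map `G_{k,m} : ℂ^{k+m-1} → ℂ^{k+m-1}`. -/
def Gmap (β : ℂ) (d k m : ℕ) (x : Fin (k + m - 1) → ℂ) : Fin (k + m - 1) → ℂ :=
  if k = 0 then
    fun j => (coordFin x j.1) ^ d - (coordFin x (m - 1)) ^ d
  else
    fun j =>
      (coordFin x j.1 - (β * coordFin x (k + m - 1) - coordFin x (k - 1)) / (β - 1)) ^ d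

/-- The critical set `C(G_{k,m})`: points where the derivative is not invertible. -/
def Gcrit (β : ℂ) (d k m : ℕ) : Set (Fin (k + m - 1) → ℂ) :=
  {z | ¬ Function.Bijective (fderiv ℂ (Gmap β d k m) z)}

/-- The post-critical set `PC(G_{k,m}) = ⋃_{j ≥ 1} G_{k,m}^{∘j}(C(G_{k,m}))`. -/
def GPC (β : ℂ) (d k m : ℕ) : Set (Fin (k + m - 1) → ℂ) :=
  ⋃ j : ℕ, ⋃ _ : 1 ≤ j, (Gmap β d k m)^[j] '' Gcrit β d k m

/-- The polynomial `P_z` associated to a point `z ∈ ℂ^{k+m-1}`. -/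
def Ppoly (β : ℂ) (d k m : ℕ) (z : Fin (k + m - 1) → ℂ) : ℂ → ℂ :=
  if k = 0 then fun t => t ^ d - (coordFin z (m - 1)) ^ d
  else fun t => (t - (β * coordFin z (k + m - 1) - coordFin z (k - 1)) / (β - 1)) ^ d

@[simp] lemma omegaForm_apply (β : ℂ) (k m i : ℕ) (v : Mspace β k m) :
    omegaForm β k m i v = (v : Eseq) i := rfl

/-- Coordinatewise derivative of `Q`. -/
def qd (d : ℕ) (z v : Eseq) (i : ℕ) : ℂ :=
  if 2 ≤ i then (d : ℂ) * z (i - 1) ^ (d - 1) * v (i - 1) else 0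

/-- Derivative of the `kappa` term. -/
def kd (β : ℂ) (d k m : ℕ) (z v : Eseq) : ℂ :=
  if k = 0 then qd d z v m else (β * qd d z v (k + m) - qd d z v k) / (β - 1)

lemma hasDerivAt_Q (d : ℕ) (z v : Eseq) (j : ℕ) :
    HasDerivAt (fun t : ℂ => Qmap d (z + t • v) j) (qd d z v j) 0 := by
  unfold Qmap qd
  by_cases hj : 2 ≤ j
  · simp only [hj, if_true, Pi.add_apply, Pi.smul_apply, smul_eq_mul]
    have h : HasDerivAt (fun t : ℂ => z (j - 1) + t * v (j - 1)) (v (j - 1)) 0 := by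
      simpa using ((hasDerivAt_id (0 : ℂ)).mul_const (v (j - 1))).const_add (z (j - 1))
    have := h.fun_pow d
    simpa [mul_comm, mul_assoc, mul_left_comm] using this
  · simp only [hj, if_false]
    exact hasDerivAt_const 0 0

lemma hasDerivAt_kappa (β : ℂ) (d k m : ℕ) (z v : Eseq) :
    HasDerivAt (fun t : ℂ => kappa β k m (Qmap d (z + t • v))) (kd β d k m z v) 0 := by
  unfold kappa kd
  by_cases hk : k = 0
  · simp only [hk, if_true]
    exact hasDerivAt_Q d z v m
  · simp only [hk, if_false]
    exact (((hasDerivAt_Q d z v (k + m)).const_mul β).sub (hasDerivAt_Q d z v k)).div_const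
      (β - 1)

lemma deriv_F (β : ℂ) (d k m : ℕ) (z v : Eseq) (i : ℕ) :
    deriv (fun t : ℂ => Fmap β d k m (z + t • v) i) 0 =
      if i = 0 then 0 else qd d z v i - kd β d k m z v := by
  unfold Fmap projH
  by_cases hi : i = 0
  · simp [hi]
  · simp only [hi, if_false]
    exact ((hasDerivAt_Q d z v i).sub (hasDerivAt_kappa β d k m z v)).deriv

lemma qd_of_le (d : ℕ) (z v : Eseq) {i : ℕ} (h : 2 ≤ i) :
    qd d z v i = (d : ℂ) * z (i - 1) ^ (d - 1) * v (i - 1) := if_pos h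

lemma qd_one (d : ℕ) (z v : Eseq) : qd d z v 1 = 0 := by simp [qd]

lemma Lv_eq (β : ℂ) (d k m : ℕ) (z : Eseq)
    (L : Mspace β k m →ₗ[ℂ] Mspace β k m) (hL : IsDerivAt β d k m z L)
    (v : Mspace β k m) (i : ℕ) (hi : i ≠ 0) :
    ((L v : Eseq)) i = qd d z (v : Eseq) i - kd β d k m z (v : Eseq) := by
  rw [hL v i, deriv_F]
  simp [hi]

/-- action of the transpose `L^*` of `L = D_z F_{k,m}` on the coordinate
forms, where `δ_i = d z_i^{d-1}`. -/
theorem stmt13 (d : ℕ) (hd : 2 ≤ d) (β : ℂ) (hβd : β ^ d = 1) (hβ1 : β ≠ 1)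
    (k m : ℕ) (hm : 1 ≤ m) (z : Eseq) (hz : z ∈ Mspace β k m)
    (hfix : Fmap β d k m z = z)
    (L : Mspace β k m →ₗ[ℂ] Mspace β k m) (hL : IsDerivAt β d k m z L) :
    (k = 0 → L.dualMap (omegaForm β k m 1) =
      (-((d : ℂ) * z (m - 1) ^ (d - 1))) • omegaForm β k m (m - 1)) ∧
    (1 ≤ k → L.dualMap (omegaForm β k m 1) =
      (-(β - 1)⁻¹) • ((β * ((d : ℂ) * z (k + m - 1) ^ (d - 1))) • omegaForm β k m (k + m - 1)
        - ((d : ℂ) * z (k - 1) ^ (d - 1)) • omegaForm β k m (k - 1))) ∧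
    (∀ i, 2 ≤ i → L.dualMap (omegaForm β k m i) =
      ((d : ℂ) * z (i - 1) ^ (d - 1)) • omegaForm β k m (i - 1)
        + L.dualMap (omegaForm β k m 1)) := by
  have hβ1' : β - 1 ≠ 0 := sub_ne_zero.mpr hβ1
  refine ⟨?_, ?_, ?_⟩
  · intro hk
    refine LinearMap.ext fun v => ?_
    have hv0 : (v : Eseq) 0 = 0 := v.2.1.1
    have h := Lv_eq β d k m z L hL v 1 one_ne_zero
    simp only [LinearMap.dualMap_apply, LinearMap.smul_apply, omegaForm_apply, smul_eq_mul]
    rw [h]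
    rw [qd_one, kd, if_pos hk]
    by_cases hm2 : 2 ≤ m
    · rw [qd_of_le d z _ hm2]; ring
    · have hm1 : m = 1 := by omega
      subst hm1
      rw [qd_one]
      simp [hv0]
  · intro hk
    refine LinearMap.ext fun v => ?_
    have hv0 : (v : Eseq) 0 = 0 := v.2.1.1
    have h := Lv_eq β d k m z L hL v 1 one_ne_zero
    simp only [LinearMap.dualMap_apply, LinearMap.smul_apply, LinearMap.sub_apply,
      omegaForm_apply, smul_eq_mul]
    rw [h]
    have hk0 : k ≠ 0 := by omega
    have hkm : 2 ≤ k + m := by omega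
    rw [qd_one, kd, if_neg hk0, qd_of_le d z _ hkm]
    by_cases hk2 : 2 ≤ k
    · rw [qd_of_le d z _ hk2]
      field_simp
      ring
    · have hk1 : k = 1 := by omega
      subst hk1
      rw [qd_one]
      simp only [show (1:ℕ) - 1 = 0 from rfl, hv0, mul_zero, zero_mul]
      field_simp
      ring
  · intro i hi
    refine LinearMap.ext fun v => ?_
    have h := Lv_eq β d k m z L hL v i (by omega)
    have h1 := Lv_eq β d k m z L hL v 1 one_ne_zero
    simp only [LinearMap.dualMap_apply, LinearMap.add_apply, LinearMap.smul_apply,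
      omegaForm_apply, smul_eq_mul]
    rw [h, h1]
    rw [qd_one, qd_of_le d z _ hi]
    ring
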